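/- arXiv:1408.6198 — 2 statements merged into one kernel-verified Lean document; each statement's English description precedes it below -/
import Mathlib

section
/- For the seed π = #_⋯_# over 𝒜 = {0,1}, let q' = ⟨X',t'⟩ and q'' = ⟨X'',t''⟩ be non-final states of S_π with max X' + t' = max X'' + t'' (where max ∅ = 0). For a set X and integer t write X ⊕ t = {x + t : x ∈ X}. Suppose the symmetric difference of X' ⊕ t' and X'' ⊕ t'' is nonempty, let g be its maximum, and assume g ∈ X' ⊕ t' (so g ∉ X'' ⊕ t'') and g > t''. Then, with d = (r+1) − g, reading the word 0^d·1 from q' ends in the final state, while reading 0^d·1 from q'' ends in a non-final state. -/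
variable {A : Type*}

/-- One transition of the subset seed automaton `S_π`: the state `none` is the final sink
state, a state `some (X, t)` is the non-final state `⟨X,t⟩`. -/
def seedStep [DecidableEq A] (one : A) (π : ℕ → Finset A) (s : ℕ) :
    Option (Finset ℕ × ℕ) → A → Option (Finset ℕ × ℕ)
  | none, _ => none
  | some (X, t), a =>
    if a = one then
      if X.sup id + (t + 1) = s then none else some (X, t + 1)
    else
      let Y : Finset ℕ := ((Finset.Icc 1 (t + 1)).filter fun x => a ∈ π x) ∪
        ((X.filter fun x => x + t + 1 ≤ s ∧ a ∈ π (x + t + 1)).image fun x => x + t + 1)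
      if Y.sup id = s then none else some (Y, 0)

/-- Reading a word from a state, applying transitions letter by letter. -/
def seedRead [DecidableEq A] (one : A) (π : ℕ → Finset A) (s : ℕ)
    (q : Option (Finset ℕ × ℕ)) (w : List A) : Option (Finset ℕ × ℕ) :=
  w.foldl (seedStep one π s) q

/-- `π` matches the alignment `w` at the (1-based) position `p`. -/
def seedMatches (one : A) (π : ℕ → Finset A) (s : ℕ) (w : List A) (p : ℕ) : Prop :=
  1 ≤ p ∧ p + s ≤ w.length + 1 ∧
    ∀ i, 1 ≤ i → i ≤ s → w.getD (p + i - 2) one ∈ π i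


/-- The seed `#_⋯_#` (one `#`, then `r` letters `_`, then one `#`) over the alphabet
`𝒜 = {0,1}` modelled by `Bool` with `1 = true` and `0 = false`: position `1` and
position `r+2` carry `# = {1}`, all other positions carry `_ = {0,1}`.
Its span is `s = r+2` and `R_π = {2,…,r+1}`. -/
def hrSeed (r : ℕ) : ℕ → Finset Bool :=
  fun i => if i = 1 ∨ i = r + 2 then {true} else {false, true}

lemma false_mem_hrSeed (r x : ℕ) : false ∈ hrSeed r x ↔ ¬(x = 1 ∨ x = r + 2) := by
  unfold hrSeed; split <;> simp_all

lemma step_false (r : ℕ) (X : Finset ℕ) (t : ℕ) (hX : ∀ x ∈ X, 1 ≤ x) (ht : t ≤ r + 1) :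
    seedStep true (hrSeed r) (r + 2) (some (X, t)) false
      = some ((((X.image fun x => x + (t + 1)) ∪ Finset.Icc 2 (t + 1)).filter
          fun y => y ≤ r + 1), 0) := by
  unfold seedStep
  simp only [Bool.false_eq_true, if_false]
  have hset : (((Finset.Icc 1 (t + 1)).filter fun x => false ∈ hrSeed r x) ∪
      ((X.filter fun x => x + t + 1 ≤ r + 2 ∧ false ∈ hrSeed r (x + t + 1)).image
        fun x => x + t + 1))
      = (((X.image fun x => x + (t + 1)) ∪ Finset.Icc 2 (t + 1)).filter fun y => y ≤ r + 1) := by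
    ext y
    simp only [Finset.mem_union, Finset.mem_filter, Finset.mem_image, Finset.mem_Icc,
      false_mem_hrSeed]
    constructor
    · rintro (⟨⟨h1, h2⟩, h3⟩ | ⟨x, ⟨hx, hle, hne⟩, rfl⟩)
      · exact ⟨Or.inr ⟨by omega, h2⟩, by omega⟩
      · exact ⟨Or.inl ⟨x, hx, by omega⟩, by omega⟩
    · rintro ⟨(⟨x, hx, rfl⟩ | ⟨h1, h2⟩), h3⟩
      · have := hX x hx
        exact Or.inr ⟨x, ⟨hx, by omega, by omega⟩, by omega⟩
      · exact Or.inl ⟨⟨by omega, h2⟩, by omega⟩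
  rw [hset]
  have hsup : (((X.image fun x => x + (t + 1)) ∪ Finset.Icc 2 (t + 1)).filter
      fun y => y ≤ r + 1).sup id ≠ r + 2 := by
    intro h
    have := Finset.sup_le (f := id)
      (s := ((X.image fun x => x + (t + 1)) ∪ Finset.Icc 2 (t + 1)).filter fun y => y ≤ r + 1)
      (a := r + 1) (fun y hy => (Finset.mem_filter.mp hy).2)
    omega
  simp [hsup]

lemma read_zeros (r : ℕ) (d : ℕ) : ∀ (X : Finset ℕ) (t : ℕ),
    (∀ x ∈ X, 1 ≤ x) → t ≤ r + 1 →
    seedRead true (hrSeed r) (r + 2) (some (X, t)) (List.replicate (d + 1) false)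
      = some ((((X.image fun x => x + (t + d + 1)) ∪ Finset.Icc (d + 2) (t + d + 1)).filter
          fun y => y ≤ r + 1), 0) := by
  induction d with
  | zero =>
    intro X t hX ht
    simpa [seedRead] using step_false r X t hX ht
  | succ d ih =>
    intro X t hX ht
    have : List.replicate (d + 2) false = false :: List.replicate (d + 1) false := rfl
    rw [this]
    have hstep := step_false r X t hX ht
    unfold seedRead
    rw [List.foldl_cons, hstep]
    set Z1 := (((X.image fun x => x + (t + 1)) ∪ Finset.Icc 2 (t + 1)).filter
      fun y => y ≤ r + 1) with hZ1
    have hZ1X : ∀ x ∈ Z1, 1 ≤ x := by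
      intro x hx
      simp only [hZ1, Finset.mem_filter, Finset.mem_union, Finset.mem_image,
        Finset.mem_Icc] at hx
      rcases hx.1 with ⟨y, hy, rfl⟩ | h <;> omega
    have := ih Z1 0 hZ1X (by omega)
    unfold seedRead at this
    rw [this]
    congr 2
    ext y
    simp only [hZ1, Finset.mem_filter, Finset.mem_union, Finset.mem_image, Finset.mem_Icc]
    constructor
    · rintro ⟨(⟨z, ⟨⟨(⟨x, hx, rfl⟩ | h1), h2⟩, rfl⟩⟩ | h), h3⟩
      · exact ⟨Or.inl ⟨x, hx, by omega⟩, by omega⟩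
      · exact ⟨Or.inr (by omega), by omega⟩
      · omega
    · rintro ⟨(⟨x, hx, rfl⟩ | h), h3⟩
      · exact ⟨Or.inl ⟨x + (t + 1), ⟨⟨Or.inl ⟨x, hx, rfl⟩, by omega⟩, by omega⟩⟩, by omega⟩
      · exact ⟨Or.inl ⟨y - (d + 1), ⟨⟨Or.inr (by omega), by omega⟩, by omega⟩⟩, by omega⟩

/-- For the seed `π = #_⋯_#` over `{0,1}`, let `⟨X',t'⟩`, `⟨X'',t''⟩` be non-final states
with `max X' + t' = max X'' + t''`.  Suppose the symmetric difference of `X' ⊕ t'` and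
`X'' ⊕ t''` is nonempty, `g` is its maximum, `g ∈ X' ⊕ t'` and `g > t''`.  Then, with
`d = (r+1) - g`, reading `0^d·1` from `⟨X',t'⟩` ends in the final state while reading
`0^d·1` from `⟨X'',t''⟩` does not. -/
theorem stmt_9 (r : ℕ) (X' X'' : Finset ℕ) (t' t'' : ℕ)
    (hX' : X' ⊆ Finset.Icc 2 (r + 1)) (hb' : X'.sup id + t' ≤ r + 1)
    (hX'' : X'' ⊆ Finset.Icc 2 (r + 1)) (hb'' : X''.sup id + t'' ≤ r + 1)
    (heq : X'.sup id + t' = X''.sup id + t'')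
    (g : ℕ)
    (hgmem : g ∈ symmDiff (X'.image fun x => x + t') (X''.image fun x => x + t''))
    (hgmax : ∀ v ∈ symmDiff (X'.image fun x => x + t') (X''.image fun x => x + t''),
      v ≤ g)
    (hgin : g ∈ X'.image fun x => x + t')
    (hgt : t'' < g) :
    seedRead true (hrSeed r) (r + 2) (some (X', t'))
        (List.replicate ((r + 1) - g) false ++ [true]) = none ∧
      seedRead true (hrSeed r) (r + 2) (some (X'', t''))
        (List.replicate ((r + 1) - g) false ++ [true]) ≠ none := by
  obtain ⟨x₀, hx₀, hx₀eq⟩ := Finset.mem_image.mp hgin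
  have hx₀' := Finset.mem_Icc.mp (hX' hx₀)
  have hx₀sup : x₀ ≤ X'.sup id := Finset.le_sup (f := id) hx₀
  -- g is not in X'' ⊕ t''
  have hgnot : g ∉ X''.image fun x => x + t'' := by
    rw [Finset.mem_symmDiff] at hgmem
    rcases hgmem with ⟨_, h⟩ | ⟨_, h⟩
    · exact h
    · exact absurd hgin h
  -- g ≤ r
  have hgle : g ≤ r := by
    by_contra hc
    have hg1 : g = r + 1 := by omega
    have hsup' : X'.sup id + t' = r + 1 := by omega
    have hne : X''.Nonempty := by
      rcases X''.eq_empty_or_nonempty with h | h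
      · rw [h] at heq; simp at heq; omega
      · exact h
    obtain ⟨b, hb, hbeq⟩ := Finset.exists_mem_eq_sup X'' hne id
    simp only [id] at hbeq
    exact hgnot (Finset.mem_image.mpr ⟨b, hb, by omega⟩)
  have hd : (r + 1) - g = (r - g) + 1 := by omega
  rw [hd]
  have hw : ∀ (q : Option (Finset ℕ × ℕ)),
      seedRead true (hrSeed r) (r + 2) q (List.replicate (r - g + 1) false ++ [true])
        = seedStep true (hrSeed r) (r + 2)
            (seedRead true (hrSeed r) (r + 2) q (List.replicate (r - g + 1) false)) true := by
    intro q
    unfold seedRead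
    rw [List.foldl_append]
    rfl
  constructor
  · -- from ⟨X', t'⟩ we reach the final state
    rw [hw]
    rw [read_zeros r (r - g) X' t' (fun x hx => by have := Finset.mem_Icc.mp (hX' hx); omega)
      (by omega)]
    set Z := (((X'.image fun x => x + (t' + (r - g) + 1)) ∪
      Finset.Icc (r - g + 2) (t' + (r - g) + 1)).filter fun y => y ≤ r + 1) with hZ
    have hmem : r + 1 ∈ Z := by
      simp only [hZ, Finset.mem_filter, Finset.mem_union, Finset.mem_image]
      exact ⟨Or.inl ⟨x₀, hx₀, by omega⟩, le_refl _⟩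
    have hsup : Z.sup id = r + 1 := by
      refine le_antisymm (Finset.sup_le fun y hy => ?_) (Finset.le_sup (f := id) hmem)
      exact (Finset.mem_filter.mp hy).2
    unfold seedStep
    simp [hsup]
  · -- from ⟨X'', t''⟩ we do not reach the final state
    rw [hw]
    rw [read_zeros r (r - g) X'' t'' (fun x hx => by have := Finset.mem_Icc.mp (hX'' hx); omega)
      (by omega)]
    set Z := (((X''.image fun x => x + (t'' + (r - g) + 1)) ∪
      Finset.Icc (r - g + 2) (t'' + (r - g) + 1)).filter fun y => y ≤ r + 1) with hZ
    have hbound : ∀ y ∈ Z, y ≤ r := by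
      intro y hy
      simp only [hZ, Finset.mem_filter, Finset.mem_union, Finset.mem_image, Finset.mem_Icc] at hy
      obtain ⟨h1, h2⟩ := hy
      rcases h1 with ⟨x, hx, rfl⟩ | h
      · by_contra hc
        have : x + t'' = g := by omega
        exact hgnot (Finset.mem_image.mpr ⟨x, hx, this⟩)
      · omega
    have hsup : Z.sup id ≤ r := Finset.sup_le hbound
    unfold seedStep
    have : ¬ (Z.sup id + (0 + 1) = r + 2) := by omega
    simp [this, show Z.sup id ≠ r + 1 by omega]
end

section
/- If ⟨X,t⟩ is a non-final state of S_π with X ≠ ∅ that is reachable from the initial state, then the state ⟨X',t⟩ with X' = X \ {max X} is also reachable from the initial state; moreover, ⟨X',t⟩ is reachable by a word of length max X' + t (with max ∅ = 0), which is strictly smaller than the length of any word that reaches ⟨X,t⟩ (every such word has length at least max X + t). -/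
variable {A : Type*}

lemma seedRead_none [DecidableEq A] (one : A) (π : ℕ → Finset A) (s : ℕ) (W : List A) :
    seedRead one π s none W = none := by
  induction W with
  | nil => rfl
  | cons a W ih => exact ih

lemma seedRead_append [DecidableEq A] (one : A) (π : ℕ → Finset A) (s : ℕ)
    (q : Option (Finset ℕ × ℕ)) (U V : List A) :
    seedRead one π s q (U ++ V) = seedRead one π s (seedRead one π s q U) V :=
  List.foldl_append

lemma seedRead_concat [DecidableEq A] (one : A) (π : ℕ → Finset A) (s : ℕ)
    (q : Option (Finset ℕ × ℕ)) (U : List A) (a : A) :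
    seedRead one π s q (U ++ [a]) = seedStep one π s (seedRead one π s q U) a := by
  rw [seedRead_append]; rfl

lemma seedStep_some [DecidableEq A] (one : A) (π : ℕ → Finset A) (s : ℕ)
    {X₁ : Finset ℕ} {t₁ : ℕ} {a : A} {X : Finset ℕ} {t : ℕ}
    (h : seedStep one π s (some (X₁, t₁)) a = some (X, t)) :
    (a = one ∧ X = X₁ ∧ t = t₁ + 1 ∧ X₁.sup id + (t₁ + 1) ≠ s) ∨
    (a ≠ one ∧ t = 0 ∧
      X = ((Finset.Icc 1 (t₁ + 1)).filter fun x => a ∈ π x) ∪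
        ((X₁.filter fun x => x + t₁ + 1 ≤ s ∧ a ∈ π (x + t₁ + 1)).image fun x => x + t₁ + 1) ∧
      X.sup id ≠ s) := by
  by_cases ha : a = one
  · left
    refine ⟨ha, ?_⟩
    subst ha
    simp only [seedStep] at h
    rw [if_pos trivial] at h
    split at h
    · exact absurd h (by simp)
    · rename_i hne
      rw [Option.some.injEq, Prod.mk.injEq] at h
      exact ⟨h.1.symm, h.2.symm, hne⟩
  · right
    refine ⟨ha, ?_⟩
    simp only [seedStep] at h
    rw [if_neg ha] at h
    split at h
    · exact absurd h (by simp)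
    · rename_i hne
      rw [Option.some.injEq, Prod.mk.injEq] at h
      exact ⟨h.2.symm, h.1.symm, h.1 ▸ hne⟩

lemma seedInv [DecidableEq A] (one : A) (π : ℕ → Finset A) (s : ℕ) (hs : 1 ≤ s) :
    ∀ (W : List A) (X : Finset ℕ) (t : ℕ),
      seedRead one π s (some (∅, 0)) W = some (X, t) →
      (∀ x ∈ X, 1 ≤ x) ∧ X.sup id + t < s := by
  intro W
  induction W using List.reverseRecOn with
  | nil =>
    intro X t h
    simp only [seedRead, List.foldl_nil, Option.some.injEq, Prod.mk.injEq] at h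
    obtain ⟨h1, h2⟩ := h
    subst h1; subst h2
    simp; omega
  | append_singleton W' a ih =>
    intro X t h
    rw [seedRead_concat] at h
    cases hq : seedRead one π s (some (∅, 0)) W' with
    | none => rw [hq] at h; simp [seedStep] at h
    | some p =>
      obtain ⟨X₁, t₁⟩ := p
      rw [hq] at h
      obtain ⟨hpos, hlt⟩ := ih X₁ t₁ hq
      rcases seedStep_some one π s h with ⟨-, hX, ht, hne⟩ | ⟨-, ht, hX, hne⟩
      · subst hX; subst ht
        exact ⟨hpos, by omega⟩
      · subst ht; subst hX
        constructor
        · intro x hx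
          simp only [Finset.mem_union, Finset.mem_filter, Finset.mem_Icc, Finset.mem_image] at hx
          rcases hx with ⟨⟨h1, _⟩, _⟩ | ⟨y, _, rfl⟩ <;> omega
        · rw [add_zero]
          refine lt_of_le_of_ne ?_ hne
          apply Finset.sup_le
          intro x hx
          simp only [id_eq]
          simp only [Finset.mem_union, Finset.mem_filter, Finset.mem_Icc, Finset.mem_image] at hx
          rcases hx with ⟨⟨_, h2⟩, _⟩ | ⟨y, ⟨_, hy, _⟩, rfl⟩
          · omega
          · simpa using hy

lemma seedLen [DecidableEq A] (one : A) (π : ℕ → Finset A) (s : ℕ) :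
    ∀ (W : List A) (X : Finset ℕ) (t : ℕ),
      seedRead one π s (some (∅, 0)) W = some (X, t) →
      X.sup id + t ≤ W.length := by
  intro W
  induction W using List.reverseRecOn with
  | nil =>
    intro X t h
    simp only [seedRead, List.foldl_nil, Option.some.injEq, Prod.mk.injEq] at h
    obtain ⟨h1, h2⟩ := h
    subst h1; subst h2
    simp
  | append_singleton W' a ih =>
    intro X t h
    rw [seedRead_concat] at h
    cases hq : seedRead one π s (some (∅, 0)) W' with
    | none => rw [hq] at h; simp [seedStep] at h
    | some p =>
      obtain ⟨X₁, t₁⟩ := p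
      rw [hq] at h
      have hlen := ih X₁ t₁ hq
      rw [List.length_append, List.length_singleton]
      rcases seedStep_some one π s h with ⟨-, hX, ht, -⟩ | ⟨-, ht, hX, -⟩
      · subst hX; subst ht; omega
      · subst ht; subst hX
        rw [add_zero]
        apply Finset.sup_le
        intro x hx
        simp only [id_eq]
        simp only [Finset.mem_union, Finset.mem_filter, Finset.mem_Icc, Finset.mem_image] at hx
        rcases hx with ⟨⟨_, h2⟩, _⟩ | ⟨y, ⟨hy, _⟩, rfl⟩
        · omega
        · have : y ≤ X₁.sup id := Finset.le_sup (f := id) hy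
          omega

lemma seedSuffix [DecidableEq A] (one : A) (π : ℕ → Finset A) (s : ℕ) (hs : 1 ≤ s) :
    ∀ (V U : List A) (X : Finset ℕ) (t : ℕ),
      seedRead one π s (some (∅, 0)) (U ++ V) = some (X, t) →
      seedRead one π s (some (∅, 0)) V =
        some (X.filter (fun x => x + t ≤ V.length), min t V.length) := by
  intro V
  induction V using List.reverseRecOn with
  | nil =>
    intro U X t h
    rw [List.append_nil] at h
    obtain ⟨hpos, -⟩ := seedInv one π s hs _ _ _ h
    have hfil : X.filter (fun x => x + t ≤ (List.nil (α := A)).length) = ∅ := by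
      rw [Finset.filter_eq_empty_iff]
      intro x hx
      have := hpos x hx
      simp only [List.length_nil]
      omega
    rw [hfil]
    simp [seedRead]
  | append_singleton V' a ih =>
    intro U X t h
    have hXinv := seedInv one π s hs _ _ _ h
    rw [← List.append_assoc, seedRead_concat] at h
    cases hq : seedRead one π s (some (∅, 0)) (U ++ V') with
    | none => rw [hq] at h; simp [seedStep] at h
    | some p =>
      obtain ⟨X₁, t₁⟩ := p
      rw [hq] at h
      obtain ⟨hpos1, hlt1⟩ := seedInv one π s hs _ _ _ hq
      have hIH := ih U X₁ t₁ hq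
      rw [seedRead_concat, hIH]
      set L := V'.length with hL
      rcases seedStep_some one π s h with ⟨ha, hX, ht, -⟩ | ⟨ha, ht, hX, hne⟩
      · -- letter is `one`
        subst ha; subst hX; subst ht
        simp only [seedStep]
        rw [if_pos trivial]
        have hsupf : (X.filter (fun x => x + t₁ ≤ L)).sup id ≤ X.sup id :=
          Finset.sup_mono (Finset.filter_subset _ _)
        have hmin : min t₁ L ≤ t₁ := min_le_left _ _
        have hcond : ¬((X.filter (fun x => x + t₁ ≤ L)).sup id + (min t₁ L + 1) = s) := by
          have := hXinv.2
          omega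
        rw [if_neg hcond]
        rw [Option.some.injEq, Prod.mk.injEq]
        constructor
        · apply Finset.filter_congr
          intro x _
          simp only [List.length_append, List.length_singleton, eq_iff_iff]
          omega
        · simp only [List.length_append, List.length_singleton]
          omega
      · -- letter is not `one`
        subst ht
        have hset : ((Finset.Icc 1 (min t₁ L + 1)).filter fun x => a ∈ π x) ∪
            (((X₁.filter (fun x => x + t₁ ≤ L)).filter
              fun x => x + (min t₁ L) + 1 ≤ s ∧ a ∈ π (x + (min t₁ L) + 1)).image
                fun x => x + (min t₁ L) + 1) =
            X.filter (fun x => x + 0 ≤ (V' ++ [a]).length) := by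
          subst hX
          ext x
          simp only [Finset.mem_union, Finset.mem_filter, Finset.mem_Icc, Finset.mem_image,
            List.length_append, List.length_singleton, add_zero]
          by_cases hτ : t₁ ≤ L
          · rw [min_eq_left hτ]
            constructor
            · rintro (⟨⟨h1, h2⟩, h3⟩ | ⟨y, ⟨⟨hy, hyL⟩, hys, hyπ⟩, rfl⟩)
              · exact ⟨Or.inl ⟨⟨h1, h2⟩, h3⟩, by omega⟩
              · exact ⟨Or.inr ⟨y, ⟨hy, hys, hyπ⟩, rfl⟩, by omega⟩
            · rintro ⟨(⟨⟨h1, h2⟩, h3⟩ | ⟨y, ⟨hy, hys, hyπ⟩, rfl⟩), hxL⟩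
              · exact Or.inl ⟨⟨h1, h2⟩, h3⟩
              · exact Or.inr ⟨y, ⟨⟨hy, by omega⟩, hys, hyπ⟩, rfl⟩
          · rw [min_eq_right (by omega : L ≤ t₁)]
            constructor
            · rintro (⟨⟨h1, h2⟩, h3⟩ | ⟨y, ⟨⟨hy, hyL⟩, hys, hyπ⟩, rfl⟩)
              · exact ⟨Or.inl ⟨⟨h1, by omega⟩, h3⟩, by omega⟩
              · exact absurd hyL (by have := hpos1 y hy; omega)
            · rintro ⟨(⟨⟨h1, h2⟩, h3⟩ | ⟨y, ⟨hy, hys, hyπ⟩, rfl⟩), hxL⟩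
              · exact Or.inl ⟨⟨h1, by omega⟩, h3⟩
              · exact absurd hxL (by have := hpos1 y hy; omega)
        simp only [seedStep]
        rw [if_neg ha, hset]
        have hsup : (X.filter (fun x => x + 0 ≤ (V' ++ [a]).length)).sup id ≤ X.sup id :=
          Finset.sup_mono (Finset.filter_subset _ _)
        have hXlt : X.sup id < s := by have := hXinv.2; omega
        rw [if_neg (by omega)]
        rw [Option.some.injEq, Prod.mk.injEq]
        exact ⟨rfl, by omega⟩

/-- If a non-final state `⟨X,t⟩` of `S_π` with `X ≠ ∅` is reachable from the initial
state, then `⟨X',t⟩` with `X' = X \ {max X}` is also reachable; moreover `⟨X',t⟩` is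
reached by a word of length `max X' + t`, and every word reaching `⟨X,t⟩` has length at
least `max X + t` (so strictly greater than `max X' + t`). -/

theorem stmt_13 [DecidableEq A] (one : A) (π : ℕ → Finset A) (s : ℕ)
    (hs : 1 ≤ s) (hone : ∀ i, 1 ≤ i → i ≤ s → one ∈ π i)
    (X : Finset ℕ) (t : ℕ)
    (hsub : X ⊆ (Finset.Icc 1 s).filter fun i => π i ≠ ({one} : Finset A))
    (hbound : X.sup id + t ≤ s - 1) (hne : X.Nonempty)
    (hreach : ∃ W : List A, seedRead one π s (some (∅, 0)) W = some (X, t)) :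
    (∃ W : List A, W.length = (X.erase (X.sup id)).sup id + t ∧
        seedRead one π s (some (∅, 0)) W = some (X.erase (X.sup id), t)) ∧
      ((X.erase (X.sup id)).sup id + t < X.sup id + t ∧
        ∀ W : List A, seedRead one π s (some (∅, 0)) W = some (X, t) →
          X.sup id + t ≤ W.length) := by
  obtain ⟨W, hW⟩ := hreach
  obtain ⟨b, hbX, hbm⟩ := Finset.exists_mem_eq_sup X hne id
  have hmX : X.sup id ∈ X := by rw [hbm]; exact hbX
  have hm1 : 1 ≤ X.sup id := by
    have := hsub hmX
    simp only [Finset.mem_filter, Finset.mem_Icc] at this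
    exact this.1.1
  have hlt : (X.erase (X.sup id)).sup id < X.sup id := by
    rw [Finset.sup_lt_iff (show (⊥ : ℕ) < X.sup id from hm1)]
    intro x hx
    have hxm := Finset.ne_of_mem_erase hx
    have hxle : x ≤ X.sup id := Finset.le_sup (f := id) (Finset.mem_of_mem_erase hx)
    simpa [id] using lt_of_le_of_ne hxle hxm
  have hlen : X.sup id + t ≤ W.length := seedLen one π s W X t hW
  set n := (X.erase (X.sup id)).sup id + t with hn
  have hnW : n ≤ W.length := by omega
  have hUV : W.take (W.length - n) ++ W.drop (W.length - n) = W := List.take_append_drop _ _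
  have hVlen : (W.drop (W.length - n)).length = n := by
    rw [List.length_drop]; omega
  have hsuf := seedSuffix one π s hs (W.drop (W.length - n)) (W.take (W.length - n)) X t
    (by rw [hUV]; exact hW)
  have hmin : min t (W.drop (W.length - n)).length = t := by
    rw [hVlen]; omega
  have hfil : X.filter (fun x => x + t ≤ (W.drop (W.length - n)).length) =
      X.erase (X.sup id) := by
    rw [hVlen]
    ext x
    simp only [Finset.mem_filter, Finset.mem_erase]
    constructor
    · rintro ⟨hxX, hle⟩
      refine ⟨?_, hxX⟩
      intro hxm
      subst hxm
      omega
    · rintro ⟨hxm, hxX⟩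
      refine ⟨hxX, ?_⟩
      have : x ≤ (X.erase (X.sup id)).sup id :=
        Finset.le_sup (f := id) (Finset.mem_erase.2 ⟨hxm, hxX⟩)
      omega
  rw [hmin, hfil] at hsuf
  exact ⟨⟨W.drop (W.length - n), hVlen, hsuf⟩,
    by omega, fun W' hW' => seedLen one π s W' X t hW'⟩
end
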